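/- For every integer n ≥ 3, there is no integer relative Heffter array H_{3n}(n;3), i.e. no integer H_t(n;k) with t = 3n and k = 3. -/

import Mathlib

/-- Number of filled cells in row `i` of the partially filled array `A`. -/
def rowFilled {m n : ℕ} (A : Fin m → Fin n → Option ℤ) (i : Fin m) : ℕ :=
  (Finset.univ.filter fun j => (A i j).isSome).card

/-- Number of filled cells in column `j` of the partially filled array `A`. -/
def colFilled {m n : ℕ} (A : Fin m → Fin n → Option ℤ) (j : Fin n) : ℕ :=
  (Finset.univ.filter fun i => (A i j).isSome).card

/-- Sum of the entries of row `i` (empty cells count as `0`). -/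
def rowSum {m n : ℕ} (A : Fin m → Fin n → Option ℤ) (i : Fin m) : ℤ :=
  ∑ j, (A i j).getD 0

/-- Sum of the entries of column `j` (empty cells count as `0`). -/
def colSum {m n : ℕ} (A : Fin m → Fin n → Option ℤ) (j : Fin n) : ℤ :=
  ∑ i, (A i j).getD 0

/-- `A` is a square integer relative Heffter array `H_t(n;k)`, written with
integer entries: each row and each column has exactly `k` filled cells, each
row and column sums to `0` in `ℤ`, every entry `x` satisfies
`1 ≤ |x| ≤ ⌊(2nk+t)/2⌋` with `|x|` not a multiple of `(2nk+t)/t` (i.e. the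
class of `x` avoids the subgroup `J` of order `t`), and for every admissible
absolute value exactly one cell contains it (up to sign), so that every class
of `ZMod (2nk+t) \ J` is represented exactly once up to sign. -/
def IsIntHeffter (n k t : ℕ) (A : Fin n → Fin n → Option ℤ) : Prop :=
  (∀ i, rowFilled A i = k) ∧
  (∀ j, colFilled A j = k) ∧
  (∀ i, rowSum A i = 0) ∧
  (∀ j, colSum A j = 0) ∧
  (∀ i j x, A i j = some x →
    1 ≤ x.natAbs ∧ x.natAbs ≤ (2 * n * k + t) / 2 ∧
      ¬ ((2 * n * k + t) / t ∣ x.natAbs)) ∧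
  (∀ x : ℕ, 1 ≤ x → x ≤ (2 * n * k + t) / 2 → ¬ ((2 * n * k + t) / t ∣ x) →
    ∃! p : Fin n × Fin n, A p.1 p.2 = some (x : ℤ) ∨ A p.1 p.2 = some (-(x : ℤ)))

/-- A square partially filled integer array is shiftable if every row and every
column contains as many positive entries as negative entries. -/
def Shiftable {n : ℕ} (A : Fin n → Fin n → Option ℤ) : Prop :=
  (∀ i : Fin n, (Finset.univ.filter fun j => 0 < (A i j).getD 0).card =
      (Finset.univ.filter fun j => (A i j).getD 0 < 0).card) ∧
  (∀ j : Fin n, (Finset.univ.filter fun i => 0 < (A i j).getD 0).card =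
      (Finset.univ.filter fun i => (A i j).getD 0 < 0).card)

/-- `A` is cyclically `k`-diagonal: its filled cells are exactly those of `k`
consecutive cyclic diagonals (cell `(r,c)` lies on diagonal `r - c (mod n)`). -/
def CycDiagonal {n : ℕ} (k : ℕ) (A : Fin n → Fin n → Option ℤ) : Prop :=
  ∃ d : ZMod n, ∀ r c : Fin n, (A r c).isSome ↔
    ∃ j : ℕ, j < k ∧ ((r : ℕ) : ZMod n) - ((c : ℕ) : ZMod n) = d + (j : ZMod n)

/-- `A` (of size `N` with `s ∣ N`) is cyclically `(s,k)`-diagonal: it is obtained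
from a cyclically `k`-diagonal `(N/s) × (N/s)` array by blowing up each cell into
an `s × s` block and then cyclically shifting the columns by some offset. -/
def CycSKDiagonal (s k : ℕ) {N : ℕ} (A : Fin N → Fin N → Option ℤ) : Prop :=
  s ∣ N ∧ ∃ (d : ZMod (N / s)) (off : ℕ), ∀ r c : Fin N, (A r c).isSome ↔
    ∃ j : ℕ, j < k ∧
      (((r : ℕ) / s : ℕ) : ZMod (N / s)) - (((((c : ℕ) + off) % N) / s : ℕ) : ZMod (N / s))
        = d + (j : ZMod (N / s))

/-- The support of a partially filled integer array: the set of absolute values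
of its entries. -/
def suppSet {m n : ℕ} (A : Fin m → Fin n → Option ℤ) : Set ℕ :=
  {a | ∃ i j x, A i j = some x ∧ x.natAbs = a}

/-- The entries of `A` have pairwise distinct absolute values. -/
def DistinctAbs {m n : ℕ} (A : Fin m → Fin n → Option ℤ) : Prop :=
  ∀ i j i' j' x y, A i j = some x → A i' j' = some y →
    x.natAbs = y.natAbs → (i, j) = (i', j')

/-- The skeleton of a partially filled array: the set of its filled positions. -/
def skel {m n : ℕ} (A : Fin m → Fin n → Option ℤ) : Set (Fin m × Fin n) :=
  {p | (A p.1 p.2).isSome}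

def wZ (x : ℤ) : ℤ := if ((x : ZMod 3) = 1) then x else if ((x : ZMod 3) = 2) then -x else 0

def wN (a : ℕ) : ℤ := if a % 3 = 1 then (a : ℤ) else if a % 3 = 2 then -(a : ℤ) else 0

lemma wZ_zero : wZ 0 = 0 := by simp [wZ]

lemma zmod3_cases : ∀ r : ZMod 3, r = 0 ∨ r = 1 ∨ r = 2 := by decide

lemma wZ_natCast (a : ℕ) : wZ (a : ℤ) = wN a := by
  have h3 : (((a % 3 : ℕ)) : ZMod 3) = ((a : ℕ) : ZMod 3) := ZMod.natCast_mod a 3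
  have hc : (((a : ℤ)) : ZMod 3) = ((a : ℕ) : ZMod 3) := by push_cast; ring
  have hm : a % 3 = 0 ∨ a % 3 = 1 ∨ a % 3 = 2 := by omega
  rcases hm with h | h | h <;>
  · rw [h] at h3
    simp only [wZ, wN, hc, ← h3, h, Nat.cast_zero, Nat.cast_one, Nat.cast_ofNat]
    norm_num <;> (intro hh; exact absurd hh (by decide))

lemma wZ_neg (x : ℤ) : wZ (-x) = wZ x := by
  have hc : (((-x : ℤ)) : ZMod 3) = -((x : ℤ) : ZMod 3) := by push_cast; ring
  have h01 : ((0 : ZMod 3)) ≠ 1 ∧ ((0:ZMod 3)) ≠ 2 ∧ (-(1:ZMod 3)) = 2 ∧ (-(2:ZMod 3)) = 1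
      ∧ ((2:ZMod 3)) ≠ 1 ∧ (-(0:ZMod 3)) = 0 := by decide
  obtain ⟨a1, a2, a3, a4, a5, a6⟩ := h01
  rcases zmod3_cases ((x : ℤ) : ZMod 3) with h | h | h <;>
    simp only [wZ, hc, h, a1, a2, a3, a4, a5, a6, if_true, if_false, neg_neg,
      one_ne_zero, if_pos rfl]

lemma wZ_eq_wN_natAbs (x : ℤ) : wZ x = wN x.natAbs := by
  have hw := wZ_natCast x.natAbs
  rcases Int.natAbs_eq x with h | h
  · nth_rewrite 1 [h]; exact hw
  · nth_rewrite 1 [h]; rw [wZ_neg]; exact hw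

lemma wZ_triple {x y z : ℤ} (hx : ((x:ZMod 3)) ≠ 0) (hy : ((y:ZMod 3)) ≠ 0)
    (hz : ((z:ZMod 3)) ≠ 0) (h : x + y + z = 0) : wZ x + wZ y + wZ z = 0 := by
  have hsum : ((x:ZMod 3)) + (y:ZMod 3) + (z:ZMod 3) = 0 := by
    have := congrArg (fun t : ℤ => ((t : ZMod 3))) h
    push_cast at this
    exact this
  have key : ∀ a b c : ZMod 3, a ≠ 0 → b ≠ 0 → c ≠ 0 → a + b + c = 0 →
      (a = 1 ∧ b = 1 ∧ c = 1) ∨ (a = 2 ∧ b = 2 ∧ c = 2) := by decide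
  have h21 : ((2 : ZMod 3)) ≠ 1 := by decide
  rcases key _ _ _ hx hy hz hsum with ⟨h1, h2, h3⟩ | ⟨h1, h2, h3⟩ <;>
    simp only [wZ, h1, h2, h3, if_true, if_pos rfl, if_neg h21] <;> linarith

lemma sum_wN_Icc (L : ℕ) : (∑ a ∈ Finset.Icc 1 (3 * L), wN a) = -(L : ℤ) := by
  induction L with
  | zero => simp
  | succ L ih =>
    have e1 : 3 * (L + 1) = (3 * L + 2) + 1 := by ring
    have e2 : 3 * L + 2 = (3 * L + 1) + 1 := by ring
    have e3 : 3 * L + 1 = (3 * L) + 1 := by ring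
    rw [e1, Finset.sum_Icc_succ_top (by omega), e2, Finset.sum_Icc_succ_top (by omega),
      e3, Finset.sum_Icc_succ_top (by omega), ih]
    have w1 : wN (3 * L + 1) = ((3 * L + 1 : ℕ) : ℤ) := by
      simp only [wN, show (3 * L + 1) % 3 = 1 from by omega, if_pos rfl, if_true]
    have w2 : wN (3 * L + 1 + 1) = -((3 * L + 1 + 1 : ℕ) : ℤ) := by
      simp only [wN, show (3 * L + 1 + 1) % 3 = 2 from by omega]
      norm_num
    have w3 : wN (3 * L + 2 + 1) = 0 := by
      simp only [wN, show (3 * L + 2 + 1) % 3 = 0 from by omega]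
      norm_num
    rw [w1, w2, w3]
    push_cast; ring

/-- for every `n ≥ 3` there is no integer `H_{3n}(n;3)`. -/
theorem no_intHeffter_H3n (n : ℕ) (hn : 3 ≤ n) :
    ¬ ∃ A : Fin n → Fin n → Option ℤ, IsIntHeffter n 3 (3 * n) A := by
  rintro ⟨A, _hrow, hcolf, _hrsum, hcsum, hent, huniq⟩
  set M : ℕ := (2 * n * 3 + 3 * n) / 2 with hM
  have hd : (2 * n * 3 + 3 * n) / (3 * n) = 3 := by
    have h9 : 2 * n * 3 + 3 * n = (3 * n) * 3 := by ring
    rw [h9, Nat.mul_div_cancel_left _ (by omega : 0 < 3 * n)]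
  -- entries are nonzero mod 3
  have hmod : ∀ i j x, A i j = some x → ((x : ZMod 3)) ≠ 0 := by
    intro i j x hx h0
    obtain ⟨_, _, h3⟩ := hent i j x hx
    rw [hd] at h3
    apply h3
    have hdvd : (3:ℤ) ∣ x := by
      exact_mod_cast (ZMod.intCast_zmod_eq_zero_iff_dvd x 3).mp h0
    have := Int.natAbs_dvd_natAbs.mpr hdvd
    simpa using this
  -- column weight sums vanish
  have hcolW : ∀ j : Fin n, (∑ i : Fin n, wZ ((A i j).getD 0)) = 0 := by
    intro j
    obtain ⟨i1, i2, i3, h12, h13, h23, hs⟩ := Finset.card_eq_three.mp (hcolf j)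
    have hvanW : ∀ i ∈ (Finset.univ : Finset (Fin n)),
        wZ ((A i j).getD 0) ≠ 0 → (A i j).isSome := by
      intro i _ hne
      by_contra hns
      rw [Option.not_isSome_iff_eq_none] at hns
      simp [hns, wZ_zero] at hne
    have hvanS : ∀ i ∈ (Finset.univ : Finset (Fin n)),
        ((A i j).getD 0) ≠ 0 → (A i j).isSome := by
      intro i _ hne
      by_contra hns
      rw [Option.not_isSome_iff_eq_none] at hns
      simp [hns] at hne
    have hW : (∑ i ∈ Finset.univ.filter (fun i => (A i j).isSome), wZ ((A i j).getD 0))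
        = ∑ i : Fin n, wZ ((A i j).getD 0) := Finset.sum_filter_of_ne hvanW
    have hS : (∑ i ∈ Finset.univ.filter (fun i => (A i j).isSome), ((A i j).getD 0))
        = ∑ i : Fin n, ((A i j).getD 0) := Finset.sum_filter_of_ne hvanS
    rw [hs] at hW hS
    have hm1 : i1 ∉ ({i2, i3} : Finset (Fin n)) := by simp [h12, h13]
    have hm2 : i2 ∉ ({i3} : Finset (Fin n)) := by simp [h23]
    rw [Finset.sum_insert hm1, Finset.sum_insert hm2, Finset.sum_singleton] at hW hS
    -- the three entries
    have hsome : ∀ i : Fin n, i ∈ ({i1, i2, i3} : Finset (Fin n)) → (A i j).isSome := by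
      intro i hi
      have : i ∈ Finset.univ.filter (fun i => (A i j).isSome) := by rw [hs]; exact hi
      exact (Finset.mem_filter.mp this).2
    obtain ⟨x1, hx1⟩ := Option.isSome_iff_exists.mp (hsome i1 (by simp))
    obtain ⟨x2, hx2⟩ := Option.isSome_iff_exists.mp (hsome i2 (by simp))
    obtain ⟨x3, hx3⟩ := Option.isSome_iff_exists.mp (hsome i3 (by simp))
    have hsum0 : x1 + x2 + x3 = 0 := by
      have hcs := hcsum j
      rw [colSum, ← hS, hx1, hx2, hx3] at hcs
      simp only [Option.getD_some] at hcs
      linarith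
    rw [← hW, hx1, hx2, hx3]
    simp only [Option.getD_some]
    have := wZ_triple (hmod _ _ _ hx1) (hmod _ _ _ hx2) (hmod _ _ _ hx3) hsum0
    linarith
  -- global weight sum is zero
  have htot : (∑ p : Fin n × Fin n, wZ ((A p.1 p.2).getD 0)) = 0 := by
    rw [Fintype.sum_prod_type, Finset.sum_comm]
    exact Finset.sum_eq_zero fun j _ => hcolW j
  -- the support set
  set Dset : Finset ℕ := (Finset.Icc 1 M).filter (fun a => ¬ (3 ∣ a)) with hD
  -- unique cell for each support value
  have hjex : ∀ a ∈ Dset, ∃ p : Fin n × Fin n,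
      (A p.1 p.2 = some (a:ℤ) ∨ A p.1 p.2 = some (-(a:ℤ))) ∧
      ∀ q : Fin n × Fin n, (A q.1 q.2 = some (a:ℤ) ∨ A q.1 q.2 = some (-(a:ℤ))) → q = p := by
    intro a ha
    rw [hD, Finset.mem_filter, Finset.mem_Icc] at ha
    obtain ⟨⟨ha1, ha2⟩, ha3⟩ := ha
    have := huniq a ha1 ha2 (by rw [hd]; exact ha3)
    exact this
  have hfilter : (∑ p ∈ Finset.univ.filter (fun p : Fin n × Fin n => (A p.1 p.2).isSome),
      wZ ((A p.1 p.2).getD 0)) = ∑ p : Fin n × Fin n, wZ ((A p.1 p.2).getD 0) := by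
    apply Finset.sum_filter_of_ne
    intro p _ hne
    by_contra hns
    rw [Option.not_isSome_iff_eq_none] at hns
    simp [hns, wZ_zero] at hne
  have hbij : (∑ p ∈ Finset.univ.filter (fun p : Fin n × Fin n => (A p.1 p.2).isSome),
      wZ ((A p.1 p.2).getD 0)) = ∑ a ∈ Dset, wN a := by
    refine Finset.sum_bij' (fun p _ => ((A p.1 p.2).getD 0).natAbs)
      (fun a ha => (hjex a ha).choose) ?_ ?_ ?_ ?_ ?_
    · -- hi : image in Dset
      intro p hp
      obtain ⟨x, hx⟩ := Option.isSome_iff_exists.mp (Finset.mem_filter.mp hp).2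
      obtain ⟨h1, h2, h3⟩ := hent p.1 p.2 x hx
      rw [hD, Finset.mem_filter, Finset.mem_Icc, hx]
      simp only [Option.getD_some]
      refine ⟨⟨h1, h2⟩, ?_⟩
      rw [hd] at h3; exact h3
    · -- hj : choice is filled
      intro a ha
      rw [Finset.mem_filter]
      rcases (hjex a ha).choose_spec.1 with h | h <;>
        exact ⟨Finset.mem_univ _, by rw [h]; rfl⟩
    · -- left_inv
      intro p hp
      obtain ⟨x, hx⟩ := Option.isSome_iff_exists.mp (Finset.mem_filter.mp hp).2
      have hxa : ((A p.1 p.2).getD 0).natAbs = x.natAbs := by rw [hx]; rfl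
      have hmem : ((A p.1 p.2).getD 0).natAbs ∈ Dset := by
        obtain ⟨h1, h2, h3⟩ := hent p.1 p.2 x hx
        rw [hD, Finset.mem_filter, Finset.mem_Icc, hxa]
        exact ⟨⟨h1, h2⟩, by rw [hd] at h3; exact h3⟩
      apply ((hjex _ hmem).choose_spec.2 p _).symm
      rw [hxa]
      rcases Int.natAbs_eq x with h | h
      · left; rw [hx, ← h]
      · right; rw [hx, ← h]
    · -- right_inv
      intro a ha
      rcases (hjex a ha).choose_spec.1 with h | h <;> rw [h] <;> simp
    · -- values agree
      intro p _
      exact wZ_eq_wN_natAbs _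
  have hsubset : (∑ a ∈ Dset, wN a) = ∑ a ∈ Finset.Icc 1 M, wN a := by
    apply Finset.sum_subset (Finset.filter_subset _ _)
    intro a hIcc hnd
    have h3 : 3 ∣ a := by
      by_contra hc
      apply hnd
      simp only [hD, Finset.mem_filter]
      exact ⟨hIcc, hc⟩
    simp only [wN, show a % 3 = 0 from by omega]
    norm_num
  have hz : (∑ a ∈ Finset.Icc 1 M, wN a) = 0 :=
    hsubset.symm.trans (hbij.symm.trans (hfilter.trans htot))
  rcases Nat.even_or_odd n with he | ho
  · obtain ⟨m, hm⟩ := he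
    have hM9 : M = 3 * (3 * m) := by omega
    rw [hM9, sum_wN_Icc] at hz
    have hm2 : 2 ≤ m := by omega
    omega
  · obtain ⟨q, hq⟩ := ho
    have hM9 : M = 3 * (3 * q + 1) + 1 := by omega
    rw [hM9, Finset.sum_Icc_succ_top (by omega), sum_wN_Icc] at hz
    have hw : wN (3 * (3 * q + 1) + 1) = ((3 * (3 * q + 1) + 1 : ℕ) : ℤ) := by
      simp only [wN, show (3 * (3 * q + 1) + 1) % 3 = 1 from by omega, if_pos rfl, if_true]
    rw [hw] at hz
    push_cast at hz
    omega
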